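/- arXiv:2604.01559 — 2 statements merged into one kernel-verified Lean document; each statement's English description precedes it below -/
import Mathlib

section
/- Let f be a nonconstant holomorphic function on a neighborhood of the closed unit disc in ℂ with f(0) = 0, and let k ≥ 1 be the vanishing order of f at 0. Then there exist a constant C > 0 and a neighborhood V of 0 such that |f'(z)| ≥ C |f(z)|^{(k-1)/k} for all z ∈ V. -/
open MeasureTheory Set Filter

/-- Let `f` be a nonconstant holomorphic function on a neighborhood of the closed unit
disc in `ℂ` with `f 0 = 0`, and let `k ≥ 1` be the vanishing order of `f` at `0`
(i.e. `f z = z^k g z` near `0` with `g` holomorphic and `g 0 ≠ 0`). Then there exist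
`C > 0` and a neighborhood `V` of `0` such that `|f'(z)| ≥ C |f(z)|^{(k-1)/k}` on `V`. -/
theorem stmt_4 (f : ℂ → ℂ) (Ω : Set ℂ) (hΩ : IsOpen Ω)
    (hball : Metric.closedBall (0:ℂ) 1 ⊆ Ω)
    (hf : DifferentiableOn ℂ f Ω)
    (hf0 : f 0 = 0)
    (hnc : ¬ ∀ z ∈ Ω, f z = 0)
    (k : ℕ) (hk : 1 ≤ k)
    (g : ℂ → ℂ) (W : Set ℂ) (hW : W ∈ nhds (0:ℂ))
    (hg : DifferentiableOn ℂ g W) (hg0 : g 0 ≠ 0)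
    (hfg : ∀ z ∈ W, f z = z ^ k * g z) :
    ∃ C > 0, ∃ V ∈ nhds (0:ℂ), ∀ z ∈ V,
      C * ‖f z‖ ^ (((k:ℝ) - 1) / k) ≤ ‖deriv f z‖ := by
  set U : Set ℂ := interior W with hUdef
  have hUopen : IsOpen U := isOpen_interior
  have hU0 : (0:ℂ) ∈ U := mem_interior_iff_mem_nhds.2 hW
  have hUW : U ⊆ W := interior_subset
  have hgU : DifferentiableOn ℂ g U := hg.mono hUW
  have hgana : ∀ z ∈ U, AnalyticAt ℂ g z := fun z hz =>
    hgU.analyticAt (hUopen.mem_nhds hz)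
  have hgc : ContinuousAt g 0 := (hgana 0 hU0).continuousAt
  have hganaOn : AnalyticOnNhd ℂ g U := hgana
  have hdgc : ContinuousAt (deriv g) 0 := (hganaOn.deriv 0 hU0).continuousAt
  set a : ℝ := ‖g 0‖ with hadef
  have ha : 0 < a := norm_pos_iff.2 hg0
  set M : ℝ := ‖deriv g 0‖ + 1 with hMdef
  have hM : 0 < M := by positivity
  set r : ℝ := min 1 (a / (4 * M)) with hrdef
  have hr0 : 0 < r := lt_min one_pos (by positivity)
  have hrM : r * M ≤ a / 4 := by
    have : r ≤ a / (4 * M) := min_le_right _ _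
    calc r * M ≤ a / (4 * M) * M := by nlinarith
      _ = a / 4 := by field_simp
  set α : ℝ := ((k:ℝ) - 1) / k with hαdef
  have hkpos : (0:ℝ) < k := by positivity
  have hα0 : 0 ≤ α := by
    apply div_nonneg _ hkpos.le
    have : (1:ℝ) ≤ k := by exact_mod_cast hk
    linarith
  have hC : (0:ℝ) < (a / 4) / (2 * a) ^ α := by
    apply div_pos (by linarith) (Real.rpow_pos_of_pos (by linarith) _)
  refine ⟨(a / 4) / (2 * a) ^ α, hC,
    {z | (a / 4) / (2 * a) ^ α * ‖f z‖ ^ α ≤ ‖deriv f z‖}, ?_, fun z hz => hz⟩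
  -- eventually statement
  have h1 : ∀ᶠ z in nhds (0:ℂ), ‖g z - g 0‖ < a / 2 := by
    have := hgc.tendsto
    have h := Metric.tendsto_nhds.1 this (a/2) (by linarith)
    filter_upwards [h] with z hz
    simpa [dist_eq_norm] using hz
  have h2 : ∀ᶠ z in nhds (0:ℂ), ‖deriv g z - deriv g 0‖ < 1 := by
    have h := Metric.tendsto_nhds.1 hdgc.tendsto 1 one_pos
    filter_upwards [h] with z hz
    simpa [dist_eq_norm] using hz
  have h3 : ∀ᶠ z in nhds (0:ℂ), ‖z‖ ≤ r := by
    have : Metric.closedBall (0:ℂ) r ∈ nhds 0 := Metric.closedBall_mem_nhds 0 hr0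
    filter_upwards [this] with z hz
    simpa [Metric.mem_closedBall, dist_eq_norm] using hz
  filter_upwards [h1, h2, h3, hUopen.mem_nhds hU0] with z hgz hdgz hzr hzU
  show (a / 4) / (2 * a) ^ α * ‖f z‖ ^ α ≤ ‖deriv f z‖
  -- derivative formula
  have hfeq : f =ᶠ[nhds z] fun w => w ^ k * g w := by
    filter_upwards [hUopen.mem_nhds hzU] with w hw
    exact hfg w (hUW hw)
  have hgd : DifferentiableAt ℂ g z := (hgana z hzU).differentiableAt
  have hderiv : deriv f z = (k : ℂ) * z ^ (k - 1) * g z + z ^ k * deriv g z := by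
    rw [hfeq.deriv_eq]
    rw [deriv_fun_mul (differentiableAt_pow k) hgd, deriv_pow_field]
  have hfz : f z = z ^ k * g z := hfg z (hUW hzU)
  -- norms
  have hgz1 : a / 2 ≤ ‖g z‖ := by
    have := norm_sub_norm_le (g 0) (g z)
    have h' : ‖g 0 - g z‖ < a / 2 := by rwa [norm_sub_rev]
    simp only [← hadef] at this
    linarith
  have hgz2 : ‖g z‖ ≤ 2 * a := by
    have := norm_le_norm_add_norm_sub' (g z) (g 0)
    simp only [← hadef] at this
    linarith [norm_sub_rev (g z) (g 0) ▸ hgz]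
  have hdgz2 : ‖deriv g z‖ ≤ M := by
    have := norm_le_norm_add_norm_sub' (deriv g z) (deriv g 0)
    rw [hMdef]
    linarith
  have hz0 : (0:ℝ) ≤ ‖z‖ := norm_nonneg z
  -- lower bound on deriv
  have hlow : ‖z‖ ^ (k - 1) * (a / 4) ≤ ‖deriv f z‖ := by
    rw [hderiv]
    have h4 : ‖(k : ℂ) * z ^ (k - 1) * g z‖ = (k:ℝ) * ‖z‖ ^ (k-1) * ‖g z‖ := by
      simp [norm_mul, norm_pow]
    have h5 : ‖z ^ k * deriv g z‖ ≤ ‖z‖ ^ (k-1) * r * M := by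
      rw [norm_mul, norm_pow]
      have hk' : ‖z‖ ^ k = ‖z‖ ^ (k-1) * ‖z‖ := by
        rw [← pow_succ]
        congr 1
        omega
      rw [hk']
      have : (0:ℝ) ≤ ‖z‖ ^ (k-1) := by positivity
      exact mul_le_mul (mul_le_mul_of_nonneg_left hzr this) hdgz2 (norm_nonneg _)
        (by positivity)
    have h6 := norm_sub_norm_le ((k : ℂ) * z ^ (k - 1) * g z) (-(z ^ k * deriv g z))
    have h7 : ‖(k : ℂ) * z ^ (k - 1) * g z - -(z ^ k * deriv g z)‖
        = ‖(k : ℂ) * z ^ (k - 1) * g z + z ^ k * deriv g z‖ := by rw [sub_neg_eq_add]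
    rw [h7, norm_neg, h4] at h6
    have hk1 : (1:ℝ) ≤ k := by exact_mod_cast hk
    have hpow : (0:ℝ) ≤ ‖z‖ ^ (k-1) := by positivity
    have h8 : ‖z‖ ^ (k-1) * (a/2) ≤ (k:ℝ) * ‖z‖ ^ (k-1) * ‖g z‖ := by
      calc ‖z‖ ^ (k-1) * (a/2) ≤ ‖z‖ ^ (k-1) * ‖g z‖ :=
            mul_le_mul_of_nonneg_left hgz1 hpow
        _ ≤ (k:ℝ) * (‖z‖ ^ (k-1) * ‖g z‖) := le_mul_of_one_le_left (by positivity) hk1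
        _ = (k:ℝ) * ‖z‖ ^ (k-1) * ‖g z‖ := by ring
    have h9 : ‖z‖ ^ (k-1) * r * M ≤ ‖z‖ ^ (k-1) * (a/4) := by
      calc ‖z‖ ^ (k-1) * r * M = ‖z‖ ^ (k-1) * (r * M) := by ring
        _ ≤ ‖z‖ ^ (k-1) * (a/4) := mul_le_mul_of_nonneg_left hrM hpow
    have haux : ‖z‖ ^ (k-1) * (a/2) - ‖z‖ ^ (k-1) * (a/4) = ‖z‖ ^ (k-1) * (a/4) := by
      ring
    nlinarith [hpow, ha, mul_nonneg hpow (le_of_lt ha)]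
  -- upper bound on ‖f z‖ ^ α
  have hfub : ‖f z‖ ^ α ≤ ‖z‖ ^ (k-1) * (2 * a) ^ α := by
    have hfn : ‖f z‖ = ‖z‖ ^ k * ‖g z‖ := by rw [hfz, norm_mul, norm_pow]
    have step1 : ‖f z‖ ^ α ≤ (‖z‖ ^ k * (2 * a)) ^ α := by
      apply Real.rpow_le_rpow (norm_nonneg _) _ hα0
      rw [hfn]
      exact mul_le_mul_of_nonneg_left hgz2 (by positivity)
    have step2 : (‖z‖ ^ k * (2 * a)) ^ α = (‖z‖ ^ k) ^ α * (2 * a) ^ α :=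
      Real.mul_rpow (by positivity) (by linarith)
    have step3 : (‖z‖ ^ k) ^ α = ‖z‖ ^ (k - 1) := by
      rw [← Real.rpow_natCast ‖z‖ k, ← Real.rpow_mul hz0]
      have hkne : (k:ℝ) ≠ 0 := ne_of_gt hkpos
      have : (k:ℝ) * α = ((k - 1 : ℕ) : ℝ) := by
        rw [hαdef]
        push_cast [Nat.cast_sub hk]
        field_simp
      rw [this, Real.rpow_natCast]
    rw [step2, step3] at step1
    exact step1
  calc (a / 4) / (2 * a) ^ α * ‖f z‖ ^ α
      ≤ (a / 4) / (2 * a) ^ α * (‖z‖ ^ (k-1) * (2 * a) ^ α) := by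
        apply mul_le_mul_of_nonneg_left hfub hC.le
    _ = ‖z‖ ^ (k-1) * (a / 4) := by
        field_simp
    _ ≤ ‖deriv f z‖ := hlow
end

section
/- Let k, l ≥ 1 be integers and let f(z₁,z₂) = z₁^k z₂^l on the unit bidisc U in ℂ². Then the energy J(ε) = ∫_{{z ∈ U : |f(z)| < ε}} |∂f(z)|² dV satisfies the exact formula J(ε) = (2π)² ( (k+l)/4 · ε² − kl/(4(l+1)) · ε^{2+2/l} − kl/(4(k+1)) · ε^{2+2/k} ); in particular J(ε) ~ π²(k+l)ε² as ε → 0⁺. -/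
open MeasureTheory Set Filter

lemma radial_complex (f : ℝ → ℝ) :
    ∫ z : ℂ, f ‖z‖ = (2 * Real.pi) * ∫ y in Set.Ioi (0:ℝ), y * f y := by
  rw [MeasureTheory.integral_fun_norm_addHaar volume f]
  simp only [Complex.finrank_real_complex, Complex.volume_ball, smul_eq_mul]
  rw [Measure.real, Complex.volume_ball, ENNReal.toReal_mul]
  simp [ENNReal.coe_toReal, mul_comm, mul_assoc, mul_left_comm]
noncomputable def Gf (k l : ℕ) (r s : ℝ) : ℝ :=
  (k:ℝ)^2 * r^(2*k-2) * s^(2*l) + (l:ℝ)^2 * r^(2*k) * s^(2*l-2)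

noncomputable def Hf (k l : ℕ) (ε r s : ℝ) : ℝ :=
  if r < 1 ∧ s < 1 ∧ r^k * s^l < ε then Gf k l r s else 0

noncomputable def mf (k l : ℕ) (ε r : ℝ) : ℝ := min 1 ((ε / r^k) ^ ((l:ℝ)⁻¹))

noncomputable def psi (k l : ℕ) (ε r : ℝ) : ℝ :=
  if r < 1 then (k:ℝ)^2 * r^(2*k-2) * (mf k l ε r)^(2*l+2)/(2*l+2)
             + (l:ℝ)^2 * r^(2*k) * (mf k l ε r)^(2*l)/(2*l) else 0

lemma inner1d (k l : ℕ) (hk : 1 ≤ k) (hl : 1 ≤ l) (ε : ℝ) (hε0 : 0 < ε)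
    (r : ℝ) (hr : 0 < r) :
    ∫ s in Ioi (0:ℝ), s * Hf k l ε r s = psi k l ε r := by
  by_cases hr1 : r < 1
  · set m := mf k l ε r with hm
    have hc : 0 < ε / r ^ k := div_pos hε0 (pow_pos hr k)
    have hm0 : 0 ≤ m := le_min zero_le_one (Real.rpow_nonneg hc.le _)
    have hstep : ∀ s ∈ Ioi (0:ℝ), s * Hf k l ε r s =
        Set.indicator (Ioo 0 m)
          (fun s => (k:ℝ)^2 * r^(2*k-2) * s^(2*l+1) + (l:ℝ)^2 * r^(2*k) * s^(2*l-1)) s := by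
      intro s hs
      have hs0 : (0:ℝ) < s := hs
      have hcond : (r < 1 ∧ s < 1 ∧ r^k * s^l < ε) ↔ s ∈ Ioo 0 m := by
        constructor
        · rintro ⟨-, h1, h2⟩
          refine ⟨hs0, lt_min h1 ?_⟩
          have h3 : s ^ l < ε / r ^ k := by
            rw [lt_div_iff₀ (pow_pos hr k)]; linarith [mul_comm (r^k) (s^l) ▸ h2]
          have h4 : s ^ l < ((ε / r ^ k) ^ ((l:ℝ)⁻¹)) ^ l := by
            rwa [Real.rpow_inv_natCast_pow hc.le (by omega)]
          exact (pow_lt_pow_iff_left₀ hs0.le (Real.rpow_nonneg hc.le _) (by omega)).mp h4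
        · rintro ⟨-, h2⟩
          simp only [hm, mf, lt_min_iff] at h2
          refine ⟨hr1, h2.1, ?_⟩
          have h4 : s ^ l < ((ε / r ^ k) ^ ((l:ℝ)⁻¹)) ^ l :=
            pow_lt_pow_left₀ h2.2 hs0.le (by omega)
          rw [Real.rpow_inv_natCast_pow hc.le (by omega)] at h4
          rw [mul_comm, ← lt_div_iff₀ (pow_pos hr k)]
          exact h4
      rw [Hf, Set.indicator_apply]
      by_cases h : s ∈ Ioo 0 m
      · rw [if_pos (hcond.mpr h), if_pos h, Gf]
        have e1 : s ^ (2*l) * s = s ^ (2*l+1) := (pow_succ s (2*l)).symm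
        have e2 : s ^ (2*l-2) * s = s ^ (2*l-1) := by
          rw [← pow_succ]; congr 1; omega
        conv_rhs => rw [← e1, ← e2]
        ring
      · rw [if_neg (fun hc' => h (hcond.mp hc')), if_neg h, mul_zero]
    rw [setIntegral_congr_fun measurableSet_Ioi hstep,
      setIntegral_indicator measurableSet_Ioo,
      inter_eq_self_of_subset_right Ioo_subset_Ioi_self,
      ← integral_Ioc_eq_integral_Ioo, ← intervalIntegral.integral_of_le hm0]
    have i1 : IntervalIntegrable (fun s => (k:ℝ)^2 * r^(2*k-2) * s^(2*l+1)) volume 0 m :=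
      (Continuous.intervalIntegrable (by continuity)) 0 m
    have i2 : IntervalIntegrable (fun s => (l:ℝ)^2 * r^(2*k) * s^(2*l-1)) volume 0 m :=
      (Continuous.intervalIntegrable (by continuity)) 0 m
    rw [intervalIntegral.integral_add i1 i2, intervalIntegral.integral_const_mul,
      intervalIntegral.integral_const_mul, integral_pow, integral_pow,
      psi, if_pos hr1]
    have e3 : 2*l-1+1 = 2*l := by omega
    have e4 : ((2*l-1 : ℕ) : ℝ) + 1 = 2*l := by
      push_cast [Nat.cast_sub (by omega : 1 ≤ 2*l)]; ring
    have e5 : ((2*l+1 : ℕ) : ℝ) + 1 = 2*(l:ℝ)+2 := by push_cast; ring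
    have e6 : 2*l+1+1 = 2*l+2 := by omega
    rw [e3, e4, e5, e6, zero_pow (by omega : 2*l+2 ≠ 0), zero_pow (by omega : 2*l ≠ 0), ← hm]
    push_cast
    ring
  · have hz : ∀ s ∈ Ioi (0:ℝ), s * Hf k l ε r s = 0 := by
      intro s _; rw [Hf, if_neg (fun h => hr1 h.1), mul_zero]
    rw [setIntegral_congr_fun measurableSet_Ioi hz, integral_zero, psi, if_neg hr1]
lemma outer1d (k l : ℕ) (hk : 1 ≤ k) (hl : 1 ≤ l) (ε : ℝ) (hε0 : 0 < ε) (hε1 : ε < 1) :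
    ∫ r in Ioi (0:ℝ), r * psi k l ε r =
      ((k:ℝ) + l)/4 * ε^2
      - (k*l : ℝ)/(4*((l:ℝ)+1)) * ε ^ ((2:ℝ) + 2/(l:ℝ))
      - (k*l : ℝ)/(4*((k:ℝ)+1)) * ε ^ ((2:ℝ) + 2/(k:ℝ)) := by
  have hK0 : (0:ℝ) < k := by exact_mod_cast hk
  have hL0 : (0:ℝ) < l := by exact_mod_cast hl
  have hKne : (k:ℝ) ≠ 0 := ne_of_gt hK0
  have hLne : (l:ℝ) ≠ 0 := ne_of_gt hL0
  set t := ε ^ ((k:ℝ)⁻¹) with htdef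
  have ht0 : 0 < t := Real.rpow_pos_of_pos hε0 _
  have ht1 : t < 1 := Real.rpow_lt_one hε0.le hε1 (by positivity)
  have htk : t ^ k = ε := Real.rpow_inv_natCast_pow hε0.le (by omega)
  have hpow : ∀ n : ℕ, t ^ n = ε ^ ((k:ℝ)⁻¹ * n) := by
    intro n; rw [Real.rpow_mul hε0.le, Real.rpow_natCast]
  have hrp2 : ∀ x : ℝ, x ^ ((2:ℝ)) = x ^ 2 := fun x => by
    rw [show (2:ℝ) = ((2:ℕ):ℝ) by norm_num, Real.rpow_natCast]
  have hε2 : ε ^ ((2:ℝ)) = ε ^ 2 := hrp2 ε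
  have ht2k : t ^ (2*k) = ε ^ 2 := by
    rw [hpow, show (k:ℝ)⁻¹ * ((2*k : ℕ):ℝ) = (2:ℝ) by push_cast; field_simp; try ring, hε2]
  have ht2k2 : t ^ (2*k+2) = ε ^ ((2:ℝ) + 2/(k:ℝ)) := by
    rw [hpow, show (k:ℝ)⁻¹ * ((2*k+2 : ℕ):ℝ) = (2:ℝ) + 2/(k:ℝ) by
      push_cast; field_simp; try ring]
  have ht2 : t ^ 2 = ε ^ ((2:ℝ)/(k:ℝ)) := by
    rw [hpow, show (k:ℝ)⁻¹ * ((2 : ℕ):ℝ) = (2:ℝ)/(k:ℝ) by push_cast; field_simp; try ring]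
  have htm : t ^ (-(2*(k:ℝ)/l)) = ε ^ (-((2:ℝ)/l)) := by
    rw [htdef, ← Real.rpow_mul hε0.le,
      show (k:ℝ)⁻¹ * (-(2*(k:ℝ)/l)) = -((2:ℝ)/l) by field_simp; try ring]
  have hBB : ε ^ ((2*(l:ℝ)+2)/l) = ε ^ ((2:ℝ) + 2/(l:ℝ)) := by
    rw [show (2*(l:ℝ)+2)/l = (2:ℝ) + 2/(l:ℝ) by field_simp; try ring]
  have hBC : ε ^ ((2*(l:ℝ)+2)/l) * ε ^ (-((2:ℝ)/l)) = ε ^ 2 := by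
    rw [← Real.rpow_add hε0, show (2*(l:ℝ)+2)/l + -((2:ℝ)/l) = (2:ℝ) by field_simp; try ring, hε2]
  have hC : ε ^ 2 * ε ^ ((2:ℝ)/(k:ℝ)) = ε ^ ((2:ℝ) + 2/(k:ℝ)) := by
    rw [← hε2, ← Real.rpow_add hε0]
  -- restrict to Ioo 0 1
  have hA : ∀ r ∈ Ioi (0:ℝ), r * psi k l ε r
      = Set.indicator (Ioo 0 1) (fun r => r * psi k l ε r) r := by
    intro r hr
    by_cases h : r < 1
    · rw [indicator_of_mem (mem_Ioo.mpr ⟨hr, h⟩)]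
    · rw [indicator_of_notMem (fun hmem => h (mem_Ioo.mp hmem).2), psi, if_neg h, mul_zero]
  rw [setIntegral_congr_fun measurableSet_Ioi hA,
    setIntegral_indicator measurableSet_Ioo,
    inter_eq_self_of_subset_right Ioo_subset_Ioi_self,
    ← Ioc_union_Ioo_eq_Ioo ht0.le ht1]
  set p1 : ℝ → ℝ := fun r => (k:ℝ)^2/(2*(l:ℝ)+2) * r^(2*k-1) + (l:ℝ)^2/(2*(l:ℝ)) * r^(2*k+1)
    with hp1
  set p2 : ℝ → ℝ := fun r =>
      (k:ℝ)^2/(2*(l:ℝ)+2) * ε^((2*(l:ℝ)+2)/l) * r ^ (-1 - 2*(k:ℝ)/l) + (l:ℝ)/2 * ε^2 * r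
    with hp2
  have eq1 : EqOn (fun r => r * psi k l ε r) p1 (Ioc 0 t) := by
    rintro r ⟨hr0, hrt⟩
    have hr1 : r < 1 := lt_of_le_of_lt hrt ht1
    have hrk : r ^ k ≤ ε := by
      calc r ^ k ≤ t ^ k := pow_le_pow_left₀ hr0.le hrt k
      _ = ε := htk
    have h1 : (1:ℝ) ≤ ε / r ^ k := (one_le_div (pow_pos hr0 k)).mpr hrk
    have hmin : mf k l ε r = 1 := by
      rw [mf, min_eq_left (Real.one_le_rpow h1 (by positivity))]
    simp only [psi, if_pos hr1, hmin, one_pow, mul_one, hp1]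
    have e1 : r ^ (2*k-2) * r = r ^ (2*k-1) := by rw [← pow_succ]; congr 1; omega
    have e2 : r ^ (2*k) * r = r ^ (2*k+1) := by rw [← pow_succ]
    conv_rhs => rw [← e1, ← e2]
    ring
  have eq2 : EqOn (fun r => r * psi k l ε r) p2 (Ioo t 1) := by
    rintro r ⟨hrt, hr1⟩
    have hr0 : 0 < r := ht0.trans hrt
    have hrk : ε < r ^ k := by
      calc ε = t ^ k := htk.symm
      _ < r ^ k := pow_lt_pow_left₀ hrt ht0.le (by omega)
    have hc : 0 < ε / r ^ k := div_pos hε0 (pow_pos hr0 k)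
    have hd1 : ε / r ^ k < 1 := (div_lt_one (pow_pos hr0 k)).mpr hrk
    have hmin : mf k l ε r = (ε / r^k) ^ ((l:ℝ)⁻¹) := by
      rw [mf, min_eq_right (Real.rpow_le_one hc.le hd1.le (by positivity))]
    simp only [psi, if_pos hr1, hmin, hp2]
    have id2 : r^(2*k) * ((ε / r^k) ^ ((l:ℝ)⁻¹))^(2*l) = ε ^ 2 := by
      rw [← Real.rpow_natCast ((ε / r^k) ^ ((l:ℝ)⁻¹)) (2*l), ← Real.rpow_mul hc.le,
        show (l:ℝ)⁻¹ * ((2*l : ℕ):ℝ) = (2:ℝ) by push_cast; field_simp; try ring, hrp2,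
        div_pow, show 2*k = k*2 by ring, pow_mul]
      field_simp
    have id1 : r^(2*k-2) * ((ε / r^k) ^ ((l:ℝ)⁻¹))^(2*l+2)
        = ε^((2*(l:ℝ)+2)/l) * r ^ (-(2:ℝ) - 2*(k:ℝ)/l) := by
      rw [← Real.rpow_natCast ((ε / r^k) ^ ((l:ℝ)⁻¹)) (2*l+2), ← Real.rpow_mul hc.le,
        show (l:ℝ)⁻¹ * ((2*l+2 : ℕ):ℝ) = (2*(l:ℝ)+2)/l by push_cast; field_simp; try ring,
        Real.div_rpow hε0.le (pow_nonneg hr0.le k),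
        ← Real.rpow_natCast r k, ← Real.rpow_mul hr0.le,
        ← Real.rpow_natCast r (2*k-2)]
      have hAB : ((2*k-2 : ℕ):ℝ) + -((k:ℝ) * ((2*(l:ℝ)+2)/l)) = -(2:ℝ) - 2*(k:ℝ)/l := by
        push_cast [Nat.cast_sub (by omega : 2 ≤ 2*k)]
        field_simp
        ring
      rw [div_eq_mul_inv, ← Real.rpow_neg hr0.le, mul_left_comm, ← Real.rpow_add hr0, hAB,
        mul_comm]
    have hrm : r ^ (-(2:ℝ) - 2*(k:ℝ)/l) * r = r ^ (-1 - 2*(k:ℝ)/l) := by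
      nth_rewrite 2 [← Real.rpow_one r]
      rw [← Real.rpow_add hr0]; ring_nf
    show r * _ = _
    linear_combination (norm := (field_simp; try ring)) ((k:ℝ)^2 * r /(2*(l:ℝ)+2)) * id1 + ((l:ℝ)^2 * r/(2*(l:ℝ))) * id2
      + ((k:ℝ)^2/(2*(l:ℝ)+2) * ε^((2*(l:ℝ)+2)/l)) * hrm
  -- integrability
  have cp1 : Continuous p1 := by
    rw [hp1]
    exact (continuous_const.mul (continuous_pow _)).add (continuous_const.mul (continuous_pow _))
  have int1 : IntegrableOn (fun r => r * psi k l ε r) (Ioc 0 t) volume :=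
    IntegrableOn.congr_fun
      ((intervalIntegrable_iff_integrableOn_Ioc_of_le ht0.le).mp (cp1.intervalIntegrable 0 t))
      eq1.symm measurableSet_Ioc
  have h0not : (0:ℝ) ∉ Set.uIcc t 1 := by
    rw [Set.uIcc_of_le ht1.le]
    exact fun h => absurd h.1 (not_le.mpr ht0)
  have ip2a : IntervalIntegrable (fun r : ℝ => r ^ (-1 - 2*(k:ℝ)/l)) volume t 1 :=
    intervalIntegral.intervalIntegrable_rpow (Or.inr h0not)
  have ip2 : IntervalIntegrable p2 volume t 1 := by
    rw [hp2]
    exact (ip2a.const_mul _).add ((continuous_const.mul continuous_id).intervalIntegrable t 1)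
  have int2 : IntegrableOn (fun r => r * psi k l ε r) (Ioo t 1) volume :=
    IntegrableOn.congr_fun
      (((intervalIntegrable_iff_integrableOn_Ioc_of_le ht1.le).mp ip2).mono_set
        Ioo_subset_Ioc_self)
      eq2.symm measurableSet_Ioo
  have disj : Disjoint (Ioc 0 t) (Ioo t 1) := by
    refine disjoint_left.mpr ?_
    rintro x ⟨_, hx2⟩ ⟨hx3, _⟩
    exact absurd hx3 (not_lt.mpr hx2)
  rw [setIntegral_union disj measurableSet_Ioo int1 int2]
  -- value on first piece
  have v1 : ∫ r in Ioc 0 t, r * psi k l ε r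
      = (k:ℝ)^2/(2*(l:ℝ)+2) * (ε^2/(2*(k:ℝ)))
        + (l:ℝ)^2/(2*(l:ℝ)) * (ε^((2:ℝ)+2/(k:ℝ))/(2*(k:ℝ)+2)) := by
    rw [setIntegral_congr_fun measurableSet_Ioc eq1, ← intervalIntegral.integral_of_le ht0.le,
      hp1]
    have i1 : IntervalIntegrable (fun r : ℝ => (k:ℝ)^2/(2*(l:ℝ)+2) * r^(2*k-1)) volume 0 t :=
      ((continuous_const.mul (continuous_pow _)).intervalIntegrable) 0 t
    have i2 : IntervalIntegrable (fun r : ℝ => (l:ℝ)^2/(2*(l:ℝ)) * r^(2*k+1)) volume 0 t :=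
      ((continuous_const.mul (continuous_pow _)).intervalIntegrable) 0 t
    rw [intervalIntegral.integral_add i1 i2, intervalIntegral.integral_const_mul,
      intervalIntegral.integral_const_mul, integral_pow, integral_pow]
    have e1 : 2*k-1+1 = 2*k := by omega
    have e2 : ((2*k-1 : ℕ) : ℝ) + 1 = 2*k := by
      push_cast [Nat.cast_sub (by omega : 1 ≤ 2*k)]; ring
    have e3 : ((2*k+1 : ℕ) : ℝ) + 1 = 2*(k:ℝ)+2 := by push_cast; ring
    rw [e1, e2, e3, zero_pow (by omega : 2*k ≠ 0), zero_pow (by omega : 2*k+1+1 ≠ 0),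
      ht2k, show 2*k+1+1 = 2*k+2 by omega, ht2k2]
    ring
  -- value on second piece
  have w1 : ε^((2*(l:ℝ)+2)/l) * ((1 - ε^(-((2:ℝ)/l)))/(-(2*(k:ℝ)/l)))
      = ((l:ℝ)/(2*(k:ℝ))) * (ε^2 - ε^((2:ℝ)+2/(l:ℝ))) := by
    linear_combination (norm := (field_simp; try ring))
      ((l:ℝ)/(2*(k:ℝ))) * hBC - ((l:ℝ)/(2*(k:ℝ))) * hBB
  have w2 : ε^2 * ((1 - ε^((2:ℝ)/(k:ℝ)))/2) = (ε^2 - ε^((2:ℝ)+2/(k:ℝ)))/2 := by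
    linear_combination (norm := (field_simp; try ring)) (-(1:ℝ)/2) * hC
  have v2 : ∫ r in Ioo t 1, r * psi k l ε r
      = (k:ℝ)^2/(2*(l:ℝ)+2) * (((l:ℝ)/(2*(k:ℝ))) * (ε^2 - ε^((2:ℝ)+2/(l:ℝ))))
        + (l:ℝ)/2 * ((ε^2 - ε^((2:ℝ)+2/(k:ℝ)))/2) := by
    rw [setIntegral_congr_fun measurableSet_Ioo eq2, ← integral_Ioc_eq_integral_Ioo,
      ← intervalIntegral.integral_of_le ht1.le, hp2]
    have i2 : IntervalIntegrable (fun r : ℝ => (l:ℝ)/2 * ε^2 * r) volume t 1 :=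
      ((continuous_const.mul continuous_id).intervalIntegrable) t 1
    rw [intervalIntegral.integral_add (ip2a.const_mul _) i2,
      intervalIntegral.integral_const_mul, intervalIntegral.integral_const_mul,
      integral_rpow (Or.inr ⟨by
        intro h
        have h2 : (0:ℝ) < 2*(k:ℝ)/l := by positivity
        linarith, h0not⟩),
      integral_id,
      show (-1 - 2*(k:ℝ)/l + 1) = -(2*(k:ℝ)/l) by ring,
      Real.one_rpow, htm, ht2]
    linear_combination ((k:ℝ)^2/(2*(l:ℝ)+2)) * w1 + ((l:ℝ)/2) * w2
  rw [v1, v2]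
  field_simp
  ring

lemma key (k l : ℕ) (hk : 1 ≤ k) (hl : 1 ≤ l) (ε : ℝ) (hε0 : 0 < ε) (hε1 : ε < 1) :
    (∫ z in {z : ℂ × ℂ | ‖z.1‖ < 1 ∧ ‖z.2‖ < 1 ∧ ‖z.1 ^ k * z.2 ^ l‖ < ε},
        ((k:ℝ)^2 * ‖z.1‖^(2*k-2) * ‖z.2‖^(2*l) + (l:ℝ)^2 * ‖z.1‖^(2*k) * ‖z.2‖^(2*l-2)))
    = (2 * Real.pi)^2 * (((k:ℝ) + l)/4 * ε^2
        - (k*l : ℝ)/(4*((l:ℝ)+1)) * ε ^ ((2:ℝ) + 2/(l:ℝ))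
        - (k*l : ℝ)/(4*((k:ℝ)+1)) * ε ^ ((2:ℝ) + 2/(k:ℝ))) := by
  set g : ℂ × ℂ → ℝ := fun z =>
    (k:ℝ)^2 * ‖z.1‖^(2*k-2) * ‖z.2‖^(2*l) + (l:ℝ)^2 * ‖z.1‖^(2*k) * ‖z.2‖^(2*l-2) with hg
  set S := {z : ℂ × ℂ | ‖z.1‖ < 1 ∧ ‖z.2‖ < 1 ∧ ‖z.1 ^ k * z.2 ^ l‖ < ε} with hSdef
  have hSopen : IsOpen S := by
    rw [hSdef]
    have h1 : IsOpen {z : ℂ × ℂ | ‖z.1‖ < 1} :=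
      isOpen_lt continuous_fst.norm continuous_const
    have h2 : IsOpen {z : ℂ × ℂ | ‖z.2‖ < 1} :=
      isOpen_lt continuous_snd.norm continuous_const
    have h3 : IsOpen {z : ℂ × ℂ | ‖z.1 ^ k * z.2 ^ l‖ < ε} :=
      isOpen_lt ((continuous_fst.pow k).mul (continuous_snd.pow l)).norm continuous_const
    have : {z : ℂ × ℂ | ‖z.1‖ < 1 ∧ ‖z.2‖ < 1 ∧ ‖z.1 ^ k * z.2 ^ l‖ < ε}
        = {z : ℂ × ℂ | ‖z.1‖ < 1} ∩ ({z : ℂ × ℂ | ‖z.2‖ < 1}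
          ∩ {z : ℂ × ℂ | ‖z.1 ^ k * z.2 ^ l‖ < ε}) := by
      ext z; simp [mem_setOf_eq, and_assoc]
    rw [this]
    exact h1.inter (h2.inter h3)
  have hgc : Continuous g := by
    rw [hg]
    exact ((continuous_const.mul (continuous_fst.norm.pow _)).mul
        (continuous_snd.norm.pow _)).add
      ((continuous_const.mul (continuous_fst.norm.pow _)).mul (continuous_snd.norm.pow _))
  have hsub : S ⊆ Metric.closedBall 0 1 := by
    intro z hz
    rw [hSdef, mem_setOf_eq] at hz
    rw [Metric.mem_closedBall, dist_zero_right, Prod.norm_def]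
    exact max_le hz.1.le hz.2.1.le
  have hgint : IntegrableOn g S volume :=
    ((hgc.continuousOn).integrableOn_compact (isCompact_closedBall 0 1)).mono_set hsub
  have hind : Integrable (S.indicator g) volume :=
    (integrable_indicator_iff hSopen.measurableSet).mpr hgint
  have heq : S.indicator g = fun z : ℂ × ℂ => Hf k l ε ‖z.1‖ ‖z.2‖ := by
    funext z
    have hmem : z ∈ S ↔ (‖z.1‖ < 1 ∧ ‖z.2‖ < 1 ∧ ‖z.1‖^k * ‖z.2‖^l < ε) := by
      rw [hSdef, mem_setOf_eq, norm_mul, norm_pow, norm_pow]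
    rw [Set.indicator_apply, Hf]
    by_cases h : ‖z.1‖ < 1 ∧ ‖z.2‖ < 1 ∧ ‖z.1‖^k * ‖z.2‖^l < ε
    · rw [if_pos (hmem.mpr h), if_pos h, hg, Gf]
    · rw [if_neg (fun hz => h (hmem.mp hz)), if_neg h]
  rw [← integral_indicator hSopen.measurableSet, heq]
  rw [heq] at hind
  rw [Measure.volume_eq_prod] at hind ⊢
  rw [integral_prod _ hind]
  simp only []
  have hsing : (volume : Measure ℂ) {(0:ℂ)} = 0 := by
    rw [← Metric.closedBall_zero, Complex.volume_closedBall]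
    simp
  have hae : ∀ᵐ x : ℂ, x ≠ 0 := by
    rw [MeasureTheory.ae_iff]
    simpa using hsing
  have step : (∫ x : ℂ, ∫ y : ℂ, Hf k l ε ‖x‖ ‖y‖)
      = ∫ x : ℂ, (2 * Real.pi) * psi k l ε ‖x‖ := by
    refine integral_congr_ae (hae.mono fun x hx => ?_)
    show (∫ y : ℂ, Hf k l ε ‖x‖ ‖y‖) = 2 * Real.pi * psi k l ε ‖x‖
    rw [radial_complex (fun s => Hf k l ε ‖x‖ s),
      inner1d k l hk hl ε hε0 ‖x‖ (norm_pos_iff.mpr hx)]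
  rw [step, radial_complex (fun r => 2 * Real.pi * psi k l ε r)]
  have : ∀ r ∈ Ioi (0:ℝ), r * (2 * Real.pi * psi k l ε r)
      = (2 * Real.pi) * (r * psi k l ε r) := fun r _ => by ring
  rw [setIntegral_congr_fun measurableSet_Ioi this, MeasureTheory.integral_const_mul,
    outer1d k l hk hl ε hε0 hε1]
  ring

/-- For `f(z₁,z₂) = z₁^k z₂^l` on the unit bidisc, the sublevel-set energy
`J(ε) = ∫_{|f|<ε} |∂f|² dV` satisfies the exact formula
`J(ε) = (2π)²((k+l)/4 ε² − kl/(4(l+1)) ε^{2+2/l} − kl/(4(k+1)) ε^{2+2/k})`,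
and in particular `J(ε) ~ π²(k+l)ε²` as `ε → 0⁺`. -/
theorem stmt_6 (k l : ℕ) (hk : 1 ≤ k) (hl : 1 ≤ l) (J : ℝ → ℝ)
    (hJ : ∀ ε : ℝ, J ε =
      ∫ z in {z : ℂ × ℂ | ‖z.1‖ < 1 ∧ ‖z.2‖ < 1 ∧ ‖z.1 ^ k * z.2 ^ l‖ < ε},
        ((k:ℝ)^2 * ‖z.1‖^(2*k-2) * ‖z.2‖^(2*l) + (l:ℝ)^2 * ‖z.1‖^(2*k) * ‖z.2‖^(2*l-2))) :
    (∀ ε ∈ Set.Ioo (0:ℝ) 1,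
      J ε = (2 * Real.pi)^2 * (((k:ℝ) + l)/4 * ε^2
          - (k*l : ℝ)/(4*((l:ℝ)+1)) * ε ^ ((2:ℝ) + 2/(l:ℝ))
          - (k*l : ℝ)/(4*((k:ℝ)+1)) * ε ^ ((2:ℝ) + 2/(k:ℝ))))
    ∧ Tendsto (fun ε => J ε / ε^2) (nhdsWithin 0 (Ioi 0))
        (nhds (Real.pi^2 * ((k:ℝ) + l))) := by
  have part1 : ∀ ε ∈ Set.Ioo (0:ℝ) 1,
      J ε = (2 * Real.pi)^2 * (((k:ℝ) + l)/4 * ε^2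
          - (k*l : ℝ)/(4*((l:ℝ)+1)) * ε ^ ((2:ℝ) + 2/(l:ℝ))
          - (k*l : ℝ)/(4*((k:ℝ)+1)) * ε ^ ((2:ℝ) + 2/(k:ℝ))) := by
    intro ε hε
    rw [hJ ε, key k l hk hl ε hε.1 hε.2]
  refine ⟨part1, ?_⟩
  have hKne : (k:ℝ) ≠ 0 := by positivity
  have hLne : (l:ℝ) ≠ 0 := by positivity
  have hrp2 : ∀ x : ℝ, x ^ ((2:ℝ)) = x ^ 2 := fun x => by
    rw [show (2:ℝ) = ((2:ℕ):ℝ) by norm_num, Real.rpow_natCast]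
  have hform : ∀ ε ∈ Set.Ioo (0:ℝ) 1, J ε / ε^2
      = (2 * Real.pi)^2 * (((k:ℝ) + l)/4
          - (k*l : ℝ)/(4*((l:ℝ)+1)) * ε ^ ((2:ℝ)/(l:ℝ))
          - (k*l : ℝ)/(4*((k:ℝ)+1)) * ε ^ ((2:ℝ)/(k:ℝ))) := by
    intro ε hε
    have hε0 : (0:ℝ) < ε := hε.1
    have e1 : ε ^ ((2:ℝ) + 2/(l:ℝ)) = ε^2 * ε ^ ((2:ℝ)/(l:ℝ)) := by
      rw [Real.rpow_add hε0, hrp2, show (2:ℝ)/(l:ℝ) = 2/(l:ℝ) by norm_num]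
    have e2 : ε ^ ((2:ℝ) + 2/(k:ℝ)) = ε^2 * ε ^ ((2:ℝ)/(k:ℝ)) := by
      rw [Real.rpow_add hε0, hrp2]
    rw [part1 ε hε, e1, e2]
    field_simp
  have hmem : Ioo (0:ℝ) 1 ∈ nhdsWithin (0:ℝ) (Ioi 0) :=
    Ioo_mem_nhdsGT_of_mem ⟨le_refl 0, zero_lt_one⟩
  have hu : Tendsto (fun ε : ℝ => ε ^ ((2:ℝ)/(l:ℝ))) (nhdsWithin 0 (Ioi 0)) (nhds 0) := by
    have hc : (0:ℝ) < 2/(l:ℝ) := by positivity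
    have := (Real.continuousAt_rpow_const 0 (2/(l:ℝ)) (Or.inr hc.le)).tendsto
    rw [Real.zero_rpow hc.ne'] at this
    exact this.mono_left nhdsWithin_le_nhds
  have hv : Tendsto (fun ε : ℝ => ε ^ ((2:ℝ)/(k:ℝ))) (nhdsWithin 0 (Ioi 0)) (nhds 0) := by
    have hc : (0:ℝ) < 2/(k:ℝ) := by positivity
    have := (Real.continuousAt_rpow_const 0 (2/(k:ℝ)) (Or.inr hc.le)).tendsto
    rw [Real.zero_rpow hc.ne'] at this
    exact this.mono_left nhdsWithin_le_nhds
  have hmain : Tendsto (fun ε : ℝ => (2 * Real.pi)^2 * (((k:ℝ) + l)/4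
          - (k*l : ℝ)/(4*((l:ℝ)+1)) * ε ^ ((2:ℝ)/(l:ℝ))
          - (k*l : ℝ)/(4*((k:ℝ)+1)) * ε ^ ((2:ℝ)/(k:ℝ))))
      (nhdsWithin 0 (Ioi 0)) (nhds (Real.pi^2 * ((k:ℝ) + l))) := by
    have h0 : Real.pi^2 * ((k:ℝ) + l)
        = (2 * Real.pi)^2 * (((k:ℝ) + l)/4
          - (k*l : ℝ)/(4*((l:ℝ)+1)) * 0 - (k*l : ℝ)/(4*((k:ℝ)+1)) * 0) := by ring
    rw [h0]
    exact Tendsto.const_mul _ ((tendsto_const_nhds.sub (hu.const_mul _)).sub (hv.const_mul _))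
  exact hmain.congr' (Filter.eventuallyEq_of_mem hmem fun ε hε => (hform ε hε).symm)
end
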